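/- arXiv:2203.13650 — 2 statements merged into one kernel-verified Lean document; each statement's English description precedes it below -/
import Mathlib

section
/- If A < K and u ≠ 0, then at the steady state (K, u√K) of the Allee plasticity system, the Jacobian has negative trace and positive determinant, hence both eigenvalues have negative real part and the steady state is locally asymptotically stable. -/
open Matrix

theorem stmt4 (A K u : ℝ) (hA : 0 < A) (hK : 0 < K) (hAK : A < K) (hu : u ≠ 0)
    (t d : ℝ) (ht : t = -(1 + u ^ 2 * (1 - A / K))) (hd : d = 2 * u ^ 2 * (1 - A / K)) :
    t < 0 ∧ 0 < d ∧
    ∀ J : Matrix (Fin 2) (Fin 2) ℝ, J.trace = t → J.det = d →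
      ∀ lam : ℂ, ((J.map (Complex.ofReal)) - lam • (1 : Matrix (Fin 2) (Fin 2) ℂ)).det = 0 →
        lam.re < 0 := by
  have hP : (0:ℝ) < 1 - A / K := by
    have : A / K < 1 := (div_lt_one hK).mpr hAK
    linarith
  have hu2 : (0:ℝ) < u ^ 2 := by positivity
  have htneg : t < 0 := by nlinarith
  have hdpos : 0 < d := by nlinarith
  refine ⟨htneg, hdpos, ?_⟩
  intro J htr hdet lam hev
  have h1 : (J 0 0 : ℂ) + (J 1 1 : ℂ) = (t : ℂ) := by
    rw [Matrix.trace_fin_two] at htr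
    exact_mod_cast htr
  have h2 : (J 0 0 : ℂ) * (J 1 1 : ℂ) - (J 0 1 : ℂ) * (J 1 0 : ℂ) = (d : ℂ) := by
    rw [Matrix.det_fin_two] at hdet
    exact_mod_cast hdet
  rw [Matrix.det_fin_two] at hev
  simp only [Matrix.sub_apply, Matrix.map_apply, Matrix.smul_apply, Matrix.one_apply,
    if_pos rfl, smul_eq_mul, mul_one] at hev
  have hev' : ((J 0 0 : ℂ) - lam) * ((J 1 1 : ℂ) - lam)
      - (J 0 1 : ℂ) * (J 1 0 : ℂ) = 0 := by
    simpa using hev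
  have key : lam ^ 2 - (t : ℂ) * lam + (d : ℂ) = 0 := by
    linear_combination hev' + lam * h1 - h2
  have hre := congrArg Complex.re key
  have him := congrArg Complex.im key
  simp [Complex.add_re, Complex.sub_re, Complex.mul_re, Complex.mul_im, pow_two,
    Complex.ofReal_re, Complex.ofReal_im] at hre him
  by_cases hy0 : lam.im = 0
  · rw [hy0] at hre
    by_contra hx0
    push_neg at hx0
    nlinarith [mul_nonneg hx0 hx0, mul_nonneg (neg_nonneg.mpr htneg.le) hx0]
  · have hfac : lam.im * (2 * lam.re - t) = 0 := by linear_combination him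
    rcases mul_eq_zero.mp hfac with h | h
    · exact absurd h hy0
    · linarith
end

section
/- If γ > 0, then the matrix [[α₁, 0, 0],[β, γ, -1],[-β, -γ, -1]] has a real eigenvalue λ = (γ - 1 + √((γ+1)² + 4γ))/2 satisfying λ ≥ γ > 0; hence the equilibrium B₁ is linearly unstable. -/
open Real Matrix

theorem stmt11 (α₁ β γ : ℝ) (hγ : 0 < γ)
    (M : Matrix (Fin 3) (Fin 3) ℝ)
    (hM : M = !![α₁, 0, 0; β, γ, -1; -β, -γ, -1])
    (lam : ℝ) (hlam : lam = (γ - 1 + Real.sqrt ((γ + 1) ^ 2 + 4 * γ)) / 2) :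
    (M - lam • (1 : Matrix (Fin 3) (Fin 3) ℝ)).det = 0 ∧ γ ≤ lam ∧ 0 < lam := by
  have hnn : (0:ℝ) ≤ (γ + 1) ^ 2 + 4 * γ := by positivity
  set s := Real.sqrt ((γ + 1) ^ 2 + 4 * γ) with hs
  have hs2 : s ^ 2 = (γ + 1) ^ 2 + 4 * γ := Real.sq_sqrt hnn
  have hs0 : 0 ≤ s := Real.sqrt_nonneg _
  have hsge : γ + 1 ≤ s := by nlinarith [sq_nonneg (s - (γ+1))]
  have hγle : γ ≤ lam := by rw [hlam]; linarith
  refine ⟨?_, hγle, lt_of_lt_of_le hγ hγle⟩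
  subst hM
  have hE : !![α₁, 0, 0; β, γ, -1; -β, -γ, -1] - lam • (1 : Matrix (Fin 3) (Fin 3) ℝ)
      = !![α₁ - lam, 0, 0; β, γ - lam, -1; -β, -γ, -1 - lam] := by
    ext i j
    fin_cases i <;> fin_cases j <;>
      simp [Matrix.one_apply, Matrix.sub_apply, Matrix.vecHead, Matrix.vecTail]
  rw [hE, Matrix.det_fin_three]
  simp [Matrix.vecHead, Matrix.vecTail]
  rw [hlam]
  linear_combination ((α₁ - (γ - 1 + s) / 2) / 4) * hs2
end
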